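/- With the notation of the rank-reduction construction (rank(X₁) = k, X₁ = UΣV†, S̃ = U†SU, D_k the invertible k×k diagonal of singular values), the 2k×2k block matrix τ = [[D_k², D_kS̃₁₁D_k],[D_kS̃₁₁†D_k, D_k(S̃₁₁†S̃₁₁ + S̃₂₁†S̃₂₁)D_k]] is positive semidefinite and PPT. -/

import Mathlib

open Matrix Kronecker Finset ComplexOrder

/-- 2x2 block matrix with n×n blocks, indexed by `Fin 2 × n`. -/
def blk {n : Type*} (A B C D : Matrix n n ℂ) :
    Matrix (Fin 2 × n) (Fin 2 × n) ℂ := fun p q =>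
  if p.1 = 0 then (if q.1 = 0 then A p.2 q.2 else B p.2 q.2)
  else (if q.1 = 0 then C p.2 q.2 else D p.2 q.2)

/-- Partial transpose on the first (qubit) factor. -/
def ptA {n : Type*} (ρ : Matrix (Fin 2 × n) (Fin 2 × n) ℂ) :
    Matrix (Fin 2 × n) (Fin 2 × n) ℂ := fun p q => ρ (q.1, p.2) (p.1, q.2)

/-- Separability of an (unnormalized) state on ℂ²⊗ℂⁿ. -/
def SepState {n : Type*} [Fintype n] (ρ : Matrix (Fin 2 × n) (Fin 2 × n) ℂ) : Prop :=
  ∃ (N : ℕ) (σ : Fin N → Matrix (Fin 2) (Fin 2) ℂ) (P : Fin N → Matrix n n ℂ),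
    (∀ i, (σ i).PosSemidef) ∧ (∀ i, (P i).PosSemidef) ∧ ρ = ∑ i, σ i ⊗ₖ P i

lemma blk_conjT {n : Type*} (A B C D : Matrix n n ℂ) :
    (blk A B C D)ᴴ = blk Aᴴ Cᴴ Bᴴ Dᴴ := by
  ext ⟨i, x⟩ ⟨j, y⟩
  fin_cases i <;> fin_cases j <;> simp [blk, conjTranspose_apply]

lemma blk_mul {n : Type*} [Fintype n] (A B C D A' B' C' D' : Matrix n n ℂ) :
    blk A B C D * blk A' B' C' D' =
      blk (A*A'+B*C') (A*B'+B*D') (C*A'+D*C') (C*B'+D*D') := by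
  ext ⟨i, x⟩ ⟨j, y⟩
  fin_cases i <;> fin_cases j <;>
    simp [blk, mul_apply, Fintype.sum_prod_type, Fin.sum_univ_two, Matrix.add_apply]

lemma ptA_blk {n : Type*} (A B C D : Matrix n n ℂ) :
    ptA (blk A B C D) = blk A C B D := by
  ext ⟨i, x⟩ ⟨j, y⟩
  fin_cases i <;> fin_cases j <;> simp [blk, ptA]

lemma toB11_mul {k m : ℕ} (M N : Matrix (Fin k ⊕ Fin m) (Fin k ⊕ Fin m) ℂ) :
    (M * N).toBlocks₁₁ = M.toBlocks₁₁ * N.toBlocks₁₁ + M.toBlocks₁₂ * N.toBlocks₂₁ := by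
  ext i j
  simp [toBlocks₁₁, toBlocks₁₂, toBlocks₂₁, mul_apply, Fintype.sum_sum_type, Matrix.add_apply]

lemma toB21_mul {k m : ℕ} (M N : Matrix (Fin k ⊕ Fin m) (Fin k ⊕ Fin m) ℂ) :
    (M * N).toBlocks₂₁ = M.toBlocks₂₁ * N.toBlocks₁₁ + M.toBlocks₂₂ * N.toBlocks₂₁ := by
  ext i j
  simp [toBlocks₂₁, toBlocks₂₂, toBlocks₁₁, mul_apply, Fintype.sum_sum_type, Matrix.add_apply]

lemma toB11_conjT {k m : ℕ} (M : Matrix (Fin k ⊕ Fin m) (Fin k ⊕ Fin m) ℂ) :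
    (Mᴴ).toBlocks₁₁ = M.toBlocks₁₁ᴴ := by
  ext i j; simp [toBlocks₁₁, conjTranspose_apply]

lemma toB12_conjT {k m : ℕ} (M : Matrix (Fin k ⊕ Fin m) (Fin k ⊕ Fin m) ℂ) :
    (Mᴴ).toBlocks₁₂ = M.toBlocks₂₁ᴴ := by
  ext i j; simp [toBlocks₁₂, toBlocks₂₁, conjTranspose_apply]

lemma toB21_conjT {k m : ℕ} (M : Matrix (Fin k ⊕ Fin m) (Fin k ⊕ Fin m) ℂ) :
    (Mᴴ).toBlocks₂₁ = M.toBlocks₁₂ᴴ := by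
  ext i j; simp [toBlocks₁₂, toBlocks₂₁, conjTranspose_apply]


def wmat {k m : ℕ} (P Q : Matrix (Fin k) (Fin k) ℂ) (R Sm : Matrix (Fin m) (Fin k) ℂ) :
    Matrix (Fin k ⊕ Fin m) (Fin 2 × Fin k) ℂ := fun r c =>
  match r with
  | Sum.inl i => if c.1 = 0 then P i c.2 else Q i c.2
  | Sum.inr i => if c.1 = 0 then R i c.2 else Sm i c.2

lemma wmat_fact {k m : ℕ} (P Q : Matrix (Fin k) (Fin k) ℂ) (R Sm : Matrix (Fin m) (Fin k) ℂ) :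
    (wmat P Q R Sm)ᴴ * wmat P Q R Sm =
      blk (Pᴴ*P + Rᴴ*R) (Pᴴ*Q + Rᴴ*Sm) (Qᴴ*P + Smᴴ*R) (Qᴴ*Q + Smᴴ*Sm) := by
  ext ⟨a, i⟩ ⟨b, j⟩
  fin_cases a <;> fin_cases b <;>
    simp [wmat, blk, mul_apply, conjTranspose_apply, Fintype.sum_sum_type, Matrix.add_apply]

theorem stmt9 {k m : ℕ}
    (U V : Matrix (Fin k ⊕ Fin m) (Fin k ⊕ Fin m) ℂ)
    (hU : U ∈ Matrix.unitaryGroup (Fin k ⊕ Fin m) ℂ)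
    (hV : V ∈ Matrix.unitaryGroup (Fin k ⊕ Fin m) ℂ)
    (σv : Fin k → ℝ) (hσ : ∀ i, 0 < σv i)
    (Dk : Matrix (Fin k) (Fin k) ℂ) (hDk : Dk = Matrix.diagonal (fun i => (σv i : ℂ)))
    (X₁ S : Matrix (Fin k ⊕ Fin m) (Fin k ⊕ Fin m) ℂ)
    (hX₁ : X₁ = U * Matrix.fromBlocks Dk 0 0 0 * Vᴴ)
    (hsppt : X₁ᴴ * Sᴴ * S * X₁ = X₁ᴴ * S * Sᴴ * X₁)
    (St : Matrix (Fin k ⊕ Fin m) (Fin k ⊕ Fin m) ℂ) (hSt : St = Uᴴ * S * U)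
    (τ : Matrix (Fin 2 × Fin k) (Fin 2 × Fin k) ℂ)
    (hτ : τ = blk (Dk * Dk) (Dk * St.toBlocks₁₁ * Dk) (Dk * St.toBlocks₁₁ᴴ * Dk)
        (Dk * (St.toBlocks₁₁ᴴ * St.toBlocks₁₁ + St.toBlocks₂₁ᴴ * St.toBlocks₂₁) * Dk)) :
    τ.PosSemidef ∧ (ptA τ).PosSemidef := by
  have hDkH : Dkᴴ = Dk := by
    subst hDk
    ext i j
    by_cases h : i = j <;>
      simp [h, Matrix.diagonal_apply, Matrix.conjTranspose_apply, Complex.conj_ofReal,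
        Ne.symm, fun hne => Matrix.diagonal_apply_ne' (fun i => (σv i : ℂ)) hne]
  set A := St.toBlocks₁₁ with hA
  set B := St.toBlocks₂₁ with hB
  set C := St.toBlocks₁₂ with hC
  -- PSD of τ
  have hτpsd : τ.PosSemidef := by
    have : τ = (wmat Dk (A * Dk) 0 (B * Dk))ᴴ * wmat Dk (A * Dk) 0 (B * Dk) := by
      rw [hτ, wmat_fact]
      congr 1 <;>
        simp [hDkH, conjTranspose_mul, Matrix.mul_add, Matrix.add_mul, Matrix.mul_assoc]
    rw [this]
    exact Matrix.posSemidef_conjTranspose_mul_self _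
  refine ⟨hτpsd, ?_⟩
  -- unitarity
  have hU1 : Uᴴ * U = 1 := by simpa [Matrix.star_eq_conjTranspose] using hU.1
  have hU2 : U * Uᴴ = 1 := by simpa [Matrix.star_eq_conjTranspose] using hU.2
  have hV1 : Vᴴ * V = 1 := by simpa [Matrix.star_eq_conjTranspose] using hV.1
  have hUc : ∀ x : Matrix (Fin k ⊕ Fin m) (Fin k ⊕ Fin m) ℂ, Uᴴ * (U * x) = x := by
    intro x; rw [← Matrix.mul_assoc, hU1, Matrix.one_mul]
  have hVc : ∀ x : Matrix (Fin k ⊕ Fin m) (Fin k ⊕ Fin m) ℂ, Vᴴ * (V * x) = x := by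
    intro x; rw [← Matrix.mul_assoc, hV1, Matrix.one_mul]
  have hUc2 : ∀ x : Matrix (Fin k ⊕ Fin m) (Fin k ⊕ Fin m) ℂ, U * (Uᴴ * x) = x := by
    intro x; rw [← Matrix.mul_assoc, hU2, Matrix.one_mul]
  have hS : S = U * St * Uᴴ := by
    rw [hSt]
    simp only [Matrix.mul_assoc]
    rw [hU2, Matrix.mul_one, hUc2]
  set F : Matrix (Fin k ⊕ Fin m) (Fin k ⊕ Fin m) ℂ := Matrix.fromBlocks Dk 0 0 0 with hF
  -- key cancellation of U, V
  have hkey : Fᴴ * (Stᴴ * (St * F)) = Fᴴ * (St * (Stᴴ * F)) := by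
    have h := hsppt
    rw [hX₁, hS] at h
    simp only [conjTranspose_mul, conjTranspose_conjTranspose, Matrix.mul_assoc] at h
    simp only [hUc] at h
    have h2 := congrArg (fun M => M * V) h
    simp only [Matrix.mul_assoc] at h2
    simp only [hV1, Matrix.mul_one] at h2
    have h3 := congrArg (fun M => Vᴴ * M) h2
    simpa only [hVc] using h3
  -- take the ₁₁ block
  have hblk : Dk * (Aᴴ * A + Bᴴ * B) * Dk = Dk * (A * Aᴴ + C * Cᴴ) * Dk := by
    have h2 := congrArg Matrix.toBlocks₁₁ hkey
    simp only [toB11_mul, toB21_mul, toB11_conjT, toB12_conjT, toB21_conjT, hF,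
      Matrix.fromBlocks_conjTranspose, Matrix.toBlocks_fromBlocks₁₁,
      Matrix.toBlocks_fromBlocks₁₂, Matrix.toBlocks_fromBlocks₂₁,
      Matrix.toBlocks_fromBlocks₂₂, Matrix.conjTranspose_zero, hDkH,
      Matrix.mul_zero, Matrix.zero_mul, add_zero, zero_add, ← hA, ← hB, ← hC] at h2
    simp only [Matrix.mul_add, Matrix.add_mul, Matrix.mul_assoc]
    simpa only [Matrix.mul_add, Matrix.add_mul, Matrix.mul_assoc] using h2
  -- cancel Dk
  have hdet : IsUnit Dk.det := by
    rw [hDk, det_diagonal]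
    refine isUnit_iff_ne_zero.2 (Finset.prod_ne_zero_iff.2 fun i _ => ?_)
    exact_mod_cast (hσ i).ne'
  have ecan : ∀ X : Matrix (Fin k) (Fin k) ℂ, Dk⁻¹ * (Dk * X * Dk) * Dk⁻¹ = X := by
    intro X
    rw [← Matrix.mul_assoc, ← Matrix.mul_assoc, Matrix.nonsing_inv_mul _ hdet,
      Matrix.one_mul, Matrix.mul_assoc, Matrix.mul_nonsing_inv _ hdet, Matrix.mul_one]
  have hGH : Aᴴ * A + Bᴴ * B = A * Aᴴ + C * Cᴴ := by
    rw [← ecan (Aᴴ * A + Bᴴ * B), hblk, ecan]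
  -- PSD of ptA τ
  have hpt : ptA τ = (wmat Dk (Aᴴ * Dk) 0 (Cᴴ * Dk))ᴴ * wmat Dk (Aᴴ * Dk) 0 (Cᴴ * Dk) := by
    rw [hτ, ptA_blk, wmat_fact, hGH]
    congr 1 <;>
      simp [hDkH, conjTranspose_mul, Matrix.mul_add, Matrix.add_mul, Matrix.mul_assoc]
  rw [hpt]
  exact Matrix.posSemidef_conjTranspose_mul_self _
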